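/- Let A be an n×n complex matrix, r ≥ 1 an integer, and Z = diag(z₁,…,z_n) the diagonal matrix of indeterminates. Then, as an identity in the multivariate polynomial ring ℂ[z₁,…,z_n]: ((r−1)!)^n · det_r(Z + A) = (∂^{r−1}/∂z₁^{r−1} ⋯ ∂^{r−1}/∂z_n^{r−1}) (det(Z + A))^r. -/

import Mathlib

open Polynomial Matrix

/-- The number of cycles of a permutation, counting fixed points as cycles. -/
def cycleCount {ι : Type*} [Fintype ι] [DecidableEq ι] (σ : Equiv.Perm ι) : ℕ :=
  σ.cycleType.card + (Fintype.card ι - σ.support.card)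

/-- The `r`-determinant `det_r(M) = Σ_σ sgn(σ) r^{c(σ)} Π_i M_{i σ(i)}`. -/
noncomputable def detr {ι : Type*} [Fintype ι] [DecidableEq ι] {R : Type*} [CommRing R]
    (r : ℕ) (M : Matrix ι ι R) : R :=
  ∑ σ : Equiv.Perm ι, ((Equiv.Perm.sign σ : ℤ) : R) * (r : R) ^ cycleCount σ * ∏ i, M i (σ i)

/-- The formal partial derivative `∂/∂zᵢ` as a linear endomorphism of `ℂ[z₁,…,z_n]`. -/
noncomputable def pd {n : ℕ} (i : Fin n) :
    MvPolynomial (Fin n) ℂ →ₗ[ℂ] MvPolynomial (Fin n) ℂ :=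
  (MvPolynomial.pderiv i).toLinearMap

/-- The matrix `Z + A`, where `Z = diag(z₁,…,z_n)` is the diagonal matrix of indeterminates. -/
noncomputable def ZaddA {n : ℕ} (A : Matrix (Fin n) (Fin n) ℂ) :
    Matrix (Fin n) (Fin n) (MvPolynomial (Fin n) ℂ) :=
  Matrix.of fun i j => (if i = j then MvPolynomial.X i else 0) + MvPolynomial.C (A i j)

local notation "CM" => MvPolynomial.C
local notation "XM" => MvPolynomial.X

lemma pd_apply {n : ℕ} (i : Fin n) (p : MvPolynomial (Fin n) ℂ) :
    pd i p = MvPolynomial.pderiv i p := rfl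

lemma pdA {n : ℕ} (i : Fin n) (m f : ℕ) (c a : ℂ) :
    ((pd i) ^ m) (CM c * (XM i + CM a) ^ f)
      = CM (c * (f.descFactorial m : ℂ)) * (XM i + CM a) ^ (f - m) := by
  induction m with
  | zero => simp
  | succ m ih =>
      rw [pow_succ', Module.End.mul_apply, ih, pd_apply, MvPolynomial.pderiv_mul,
        MvPolynomial.pderiv_C, zero_mul, zero_add]
      rw [show (MvPolynomial.pderiv i) ((XM i + CM a) ^ (f - m))
            = (f - m) • ((XM i + CM a) ^ (f - m - 1)) by
        have := Derivation.leibniz_pow (MvPolynomial.pderiv i) (XM i + CM a) (f - m)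
        rw [this]
        simp]
      rw [Nat.descFactorial_succ, Nat.sub_sub]
      push_cast [nsmul_eq_mul]
      simp only [MvPolynomial.C_mul, map_natCast]
      ring

lemma pd_ne {n : ℕ} {i j : Fin n} (hij : j ≠ i) (f : ℕ) (c a : ℂ) :
    pd j (CM c * (XM i + CM a) ^ f) = 0 := by
  rw [pd_apply, MvPolynomial.pderiv_mul, MvPolynomial.pderiv_C, zero_mul, zero_add,
    Derivation.leibniz_pow]
  simp [MvPolynomial.pderiv_X, hij]

def IsUni {n : ℕ} (i : Fin n) (p : MvPolynomial (Fin n) ℂ) : Prop :=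
  ∃ c a f, p = CM c * (XM i + CM a) ^ f

lemma IsUni.pd_ne' {n : ℕ} {i j : Fin n} (hij : j ≠ i) {p} (hp : IsUni i p) :
    pd j p = 0 := by
  obtain ⟨c, a, f, rfl⟩ := hp; exact pd_ne hij f c a

lemma IsUni.pdpow {n : ℕ} {i : Fin n} {p} (hp : IsUni i p) (m : ℕ) :
    IsUni i (((pd i) ^ m) p) := by
  obtain ⟨c, a, f, rfl⟩ := hp
  exact ⟨_, _, _, pdA i m f c a⟩

lemma pdpow_mul_right {n : ℕ} (j : Fin n) (m : ℕ) (u v : MvPolynomial (Fin n) ℂ)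
    (hv : pd j v = 0) : ((pd j) ^ m) (u * v) = ((pd j) ^ m) u * v := by
  induction m with
  | zero => simp
  | succ m ih =>
      have hv' : MvPolynomial.pderiv j v = 0 := hv
      rw [pow_succ', Module.End.mul_apply, ih, pd_apply, MvPolynomial.pderiv_mul, hv',
        mul_zero, add_zero, Module.End.mul_apply, pd_apply]

lemma pd_prod_eq_zero {n : ℕ} (j : Fin n) (s : Finset (Fin n))
    (E : Fin n → MvPolynomial (Fin n) ℂ) (h : ∀ i ∈ s, pd j (E i) = 0) :
    pd j (∏ i ∈ s, E i) = 0 := by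
  induction s using Finset.induction_on with
  | empty => simp [pd_apply]
  | @insert a s' hx ih =>
      rw [Finset.prod_insert hx, pd_apply, MvPolynomial.pderiv_mul, ← pd_apply, ← pd_apply,
        h a (Finset.mem_insert_self a s'), ih fun i hi => h i (Finset.mem_insert_of_mem hi),
        zero_mul, mul_zero, add_zero]

lemma lemL {n : ℕ} (m : ℕ) (B : Fin n → MvPolynomial (Fin n) ℂ)
    (hB : ∀ i, IsUni i (B i)) (K : List (Fin n)) (hK : K.Nodup) :
    (K.map fun i => (pd i) ^ m).prod (∏ i, B i)
      = ∏ i, if i ∈ K then ((pd i) ^ m) (B i) else B i := by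
  induction K with
  | nil => simp
  | cons j t ih =>
      have hnd := List.nodup_cons.mp hK
      rw [List.map_cons, List.prod_cons, Module.End.mul_apply, ih hnd.2]
      set E : Fin n → MvPolynomial (Fin n) ℂ := fun i => if i ∈ t then ((pd i) ^ m) (B i) else B i with hE
      have hEuni : ∀ i, IsUni i (E i) := fun i => by
        by_cases h : i ∈ t <;> simp only [hE, h, if_true, if_false]
        · exact (hB i).pdpow m
        · exact hB i
      have h1 : ∏ i, E i = E j * ∏ i ∈ Finset.univ.erase j, E i :=
        (Finset.mul_prod_erase Finset.univ E (Finset.mem_univ j)).symm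
      rw [h1, pdpow_mul_right j m (E j) _ (pd_prod_eq_zero j _ _ fun i hi =>
        (hEuni i).pd_ne' (Finset.ne_of_mem_erase hi).symm)]
      rw [← Finset.mul_prod_erase Finset.univ
        (fun i => if i ∈ j :: t then ((pd i) ^ m) (B i) else B i) (Finset.mem_univ j)]
      congr 1
      · simp [hE, hnd.1]
      · refine Finset.prod_congr rfl fun i hi => ?_
        have hij : i ≠ j := Finset.ne_of_mem_erase hi
        simp [hE, List.mem_cons, hij]

lemma card_prescribed {n r : ℕ} (s : Finset (Fin n)) (h₀ : Fin n → Fin r) :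
    (Finset.univ.filter fun h : Fin n → Fin r => ∀ i ∈ s, h i = h₀ i).card
      = r ^ (n - s.card) := by
  have := Finset.card_bij'
    (fun (h : Fin n → Fin r) (_ : h ∈ Finset.univ.filter fun h => ∀ i ∈ s, h i = h₀ i) =>
      (fun x : ↥(sᶜ) => h x.1 : ↥(sᶜ) → Fin r))
    (fun (f : ↥(sᶜ) → Fin r) (_ : f ∈ Finset.univ) =>
      (fun i => if hi : i ∈ sᶜ then f ⟨i, hi⟩ else h₀ i))
    (fun h hh => Finset.mem_univ _)
    (fun f hf => by
      simp only [Finset.mem_filter, Finset.mem_univ, true_and]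
      intro i hi
      beta_reduce
      rw [dif_neg (by simpa using hi)])
    (fun h hh => by
      funext i
      beta_reduce
      by_cases hi : i ∈ sᶜ
      · rw [dif_pos hi]
      · rw [dif_neg hi]
        exact ((Finset.mem_filter.mp hh).2 i (by simpa using hi)).symm)
    (fun f hf => by funext x; beta_reduce; rw [dif_pos x.2])
  rw [this]
  simp [Finset.card_univ, Finset.card_compl]

lemma inv_along_orbit {n r : ℕ} {σ : Equiv.Perm (Fin n)} {h : Fin n → Fin r}
    (hinv : h ∘ σ = h) : ∀ (m : ℤ) (x : Fin n), h ((σ ^ m) x) = h x := by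
  have h1 : ∀ x, h (σ x) = h x := fun x => congrFun hinv x
  have h2 : ∀ x, h (σ⁻¹ x) = h x := fun x => by
    conv_rhs => rw [← (by simp : σ (σ⁻¹ x) = x)]
    rw [h1]
  intro m
  induction m using Int.induction_on with
  | zero => simp
  | succ k ih =>
      intro x
      rw [show σ ^ ((k : ℤ) + 1) = σ * σ ^ (k : ℤ) by rw [← _root_.zpow_one_add]; ring_nf]
      rw [Equiv.Perm.mul_apply, h1, ih]
  | pred k ih =>
      intro x
      rw [show σ ^ (-(k : ℤ) - 1) = σ⁻¹ * σ ^ (-(k : ℤ)) by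
        rw [← _root_.zpow_neg_one, ← _root_.zpow_add]; ring_nf]
      rw [Equiv.Perm.mul_apply, h2, ih]

lemma card_invariant {n r : ℕ} (σ : Equiv.Perm (Fin n)) :
    (Finset.univ.filter fun h : Fin n → Fin r => h ∘ σ = h).card = r ^ cycleCount σ := by
  classical
  have hne : ∀ c : ↥σ.cycleFactorsFinset, c.1.support.Nonempty := fun c => by
    rcases (Equiv.Perm.mem_cycleFactorsFinset_iff.mp c.2).1 with hcyc
    rw [Finset.nonempty_iff_ne_empty, Ne, Equiv.Perm.support_eq_empty_iff]
    exact hcyc.ne_one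
  have key := Finset.card_bij'
    (fun (h : Fin n → Fin r) (_ : h ∈ Finset.univ.filter fun h => h ∘ σ = h) =>
      ((fun c : ↥σ.cycleFactorsFinset => h (c.1.support.min' (hne c))),
       (fun x : ↥(σ.supportᶜ) => h x.1)))
    (fun p (_ : p ∈ (Finset.univ : Finset ((↥σ.cycleFactorsFinset → Fin r) × (↥(σ.supportᶜ) → Fin r)))) =>
      (fun i => if hi : i ∈ σ.support then
          p.1 ⟨σ.cycleOf i, Equiv.Perm.cycleOf_mem_cycleFactorsFinset_iff.mpr hi⟩
        else p.2 ⟨i, by simpa using hi⟩))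
    (fun h hh => Finset.mem_univ _)
    (fun p hp => by
      simp only [Finset.mem_filter, Finset.mem_univ, true_and]
      funext x
      by_cases hx : x ∈ σ.support
      · have hsx : σ x ∈ σ.support := Equiv.Perm.apply_mem_support.mpr hx
        simp only [Function.comp_apply, dif_pos hsx, dif_pos hx]
        exact congrArg p.1 (Subtype.ext (Equiv.Perm.cycleOf_self_apply σ x))
      · simp only [Function.comp_apply, Equiv.Perm.notMem_support.mp hx])
    (fun h hh => by
      have hinv : h ∘ σ = h := (Finset.mem_filter.mp hh).2
      funext i
      by_cases hi : i ∈ σ.support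
      · simp only [dif_pos hi]
        have hy := (σ.cycleOf i).support.min'_mem (hne ⟨σ.cycleOf i,
          Equiv.Perm.cycleOf_mem_cycleFactorsFinset_iff.mpr hi⟩)
        rw [Equiv.Perm.mem_support_cycleOf_iff] at hy
        obtain ⟨m, hm⟩ := hy.1
        rw [← hm, inv_along_orbit hinv]
      · simp only [dif_neg hi])
    (fun p hp => by
      apply Prod.ext
      · funext c
        have hmin : (c.1.support.min' (hne c)) ∈ c.1.support := c.1.support.min'_mem _
        have hmem : (c.1.support.min' (hne c)) ∈ σ.support :=
          Equiv.Perm.mem_cycleFactorsFinset_support_le c.2 hmin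
        simp only [dif_pos hmem]
        exact congrArg p.1 (Subtype.ext (Equiv.Perm.cycle_is_cycleOf hmin c.2).symm)
      · funext x
        have hx : ¬ x.1 ∈ σ.support := Finset.mem_compl.mp x.2
        simp only [dif_neg hx])
  rw [key, Finset.card_univ, Fintype.card_prod, Fintype.card_fun, Fintype.card_fun,
    Fintype.card_coe, Fintype.card_coe, Finset.card_compl, Fintype.card_fin, ← pow_add]
  congr 1
  unfold cycleCount
  rw [Equiv.Perm.cycleType_def, Multiset.card_map]
  rfl

def restr {n r : ℕ} (σ : Equiv.Perm (Fin n)) (h : Fin n → Fin r) (hinv : h ∘ ⇑σ = h)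
    (k : Fin r) : Equiv.Perm (Fin n) where
  toFun i := if h i = k then σ i else i
  invFun i := if h i = k then σ⁻¹ i else i
  left_inv i := by
    by_cases hik : h i = k
    · have : h (σ i) = k := by rw [show h (σ i) = h i from congrFun hinv i, hik]
      simp [hik, this]
    · simp [hik]
  right_inv i := by
    by_cases hik : h i = k
    · have : h (σ⁻¹ i) = k := by
        rw [show h (σ⁻¹ i) = h (σ (σ⁻¹ i)) from (congrFun hinv (σ⁻¹ i)).symm]
        simp [hik]
      simp only [Equiv.Perm.inv_def] at this
      simp [hik, this]
    · simp [hik]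

lemma restr_apply {n r : ℕ} (σ : Equiv.Perm (Fin n)) (h : Fin n → Fin r)
    (hinv : h ∘ ⇑σ = h) (k : Fin r) (i : Fin n) :
    restr σ h hinv k i = if h i = k then σ i else i := rfl

noncomputable def eP {n r : ℕ} (p : Equiv.Perm (Fin n) × (Fin n → Fin r)) :
    Fin r → Equiv.Perm (Fin n) := by
  classical exact
    if hp : p.2 ∘ ⇑p.1 = p.2 then fun k => restr p.1 p.2 hp k else fun _ => 1

lemma eP_apply {n r : ℕ} {σ : Equiv.Perm (Fin n)} {h : Fin n → Fin r}
    (hinv : h ∘ ⇑σ = h) (k : Fin r) (i : Fin n) :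
    eP (σ, h) k i = if h i = k then σ i else i := by
  rw [eP]
  simp only [dif_pos hinv]
  rfl

lemma prod_map_restr {n r : ℕ} {σ : Equiv.Perm (Fin n)} {h : Fin n → Fin r}
    (hinv : h ∘ ⇑σ = h) (K : List (Fin r)) (hK : K.Nodup) (i : Fin n) :
    (K.map (eP (σ, h))).prod i = if h i ∈ K then σ i else i := by
  induction K with
  | nil => simp
  | cons k t ih =>
      have hnd := List.nodup_cons.mp hK
      rw [List.map_cons, List.prod_cons, Equiv.Perm.mul_apply, ih hnd.2]
      by_cases hit : h i ∈ t
      · rw [if_pos hit, eP_apply hinv]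
        have hhσ : h (σ i) = h i := congrFun hinv i
        rw [if_neg (by rw [hhσ]; exact fun hc => hnd.1 (hc ▸ hit)),
          if_pos (List.mem_cons_of_mem _ hit)]
      · rw [if_neg hit, eP_apply hinv]
        by_cases hik : h i = k
        · rw [if_pos hik, if_pos (by simp [hik])]
        · rw [if_neg hik, if_neg (by simp [hik, hit])]

lemma prod_ofFn_eP {n r : ℕ} (hr : 1 ≤ r) {σ : Equiv.Perm (Fin n)} {h : Fin n → Fin r}
    (hinv : h ∘ ⇑σ = h) : (List.ofFn (eP (σ, h))).prod = σ := by
  have := prod_map_restr hinv (List.finRange r) (List.nodup_finRange r)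
  apply Equiv.ext; intro i
  rw [List.ofFn_eq_map, this i, if_pos (List.mem_finRange _)]

def Good {n r : ℕ} (g : Fin r → Equiv.Perm (Fin n)) : Prop :=
  ∀ i k l, g k i ≠ i → g l i ≠ i → k = l

lemma prod_map_fix {n r : ℕ} (g : Fin r → Equiv.Perm (Fin n)) (K : List (Fin r)) (i : Fin n)
    (hfix : ∀ k ∈ K, g k i = i) : (K.map g).prod i = i := by
  induction K with
  | nil => simp
  | cons k t ih =>
      rw [List.map_cons, List.prod_cons, Equiv.Perm.mul_apply,
        ih fun l hl => hfix l (List.mem_cons_of_mem _ hl), hfix k List.mem_cons_self]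

lemma move_move {n : ℕ} (τ : Equiv.Perm (Fin n)) {i : Fin n} (hi : τ i ≠ i) : τ (τ i) ≠ τ i :=
  fun hc => hi (τ.injective hc)

lemma prod_map_move {n r : ℕ} {g : Fin r → Equiv.Perm (Fin n)} (hg : Good g)
    (K : List (Fin r)) (hK : K.Nodup) (i : Fin n) (k : Fin r) (hk : k ∈ K)
    (hmove : g k i ≠ i) : (K.map g).prod i = g k i := by
  induction K with
  | nil => simp at hk
  | cons a t ih =>
      have hnd := List.nodup_cons.mp hK
      rw [List.map_cons, List.prod_cons, Equiv.Perm.mul_apply]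
      rcases List.mem_cons.mp hk with rfl | hkt
      · rw [prod_map_fix g t i fun l hl => by
          by_contra hc
          exact hnd.1 ((hg i l k hc hmove) ▸ hl)]
      · rw [ih hnd.2 hkt]
        have hka : k ≠ a := fun hc => hnd.1 (hc ▸ hkt)
        have : g a (g k i) = g k i := by
          by_contra hc
          exact hka (hg (g k i) k a (move_move (g k) hmove) hc)
        exact this

noncomputable def sigmaOf {n r : ℕ} (g : Fin r → Equiv.Perm (Fin n)) : Equiv.Perm (Fin n) :=
  (List.ofFn g).prod

lemma sigmaOf_fix {n r : ℕ} (g : Fin r → Equiv.Perm (Fin n)) (i : Fin n)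
    (hfix : ∀ k, g k i = i) : sigmaOf g i = i := by
  rw [sigmaOf, List.ofFn_eq_map]
  exact prod_map_fix g _ i fun k _ => hfix k

lemma sigmaOf_move {n r : ℕ} {g : Fin r → Equiv.Perm (Fin n)} (hg : Good g) (i : Fin n)
    (k : Fin r) (hmove : g k i ≠ i) : sigmaOf g i = g k i := by
  rw [sigmaOf, List.ofFn_eq_map]
  exact prod_map_move hg _ (List.nodup_finRange r) i k (List.mem_finRange k) hmove

lemma sign_sigmaOf {n r : ℕ} (g : Fin r → Equiv.Perm (Fin n)) :
    Equiv.Perm.sign (sigmaOf g) = ∏ k, Equiv.Perm.sign (g k) := by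
  rw [sigmaOf, MonoidHom.map_list_prod, List.map_ofFn, List.prod_ofFn]
  rfl

def fI {n r : ℕ} (g : Fin r → Equiv.Perm (Fin n)) (i : Fin n) : ℕ :=
  (Finset.univ.filter fun k => g k i = i).card

def cI {n r : ℕ} (A : Matrix (Fin n) (Fin n) ℂ) (g : Fin r → Equiv.Perm (Fin n))
    (i : Fin n) : ℂ :=
  ∏ k ∈ Finset.univ.filter fun k : Fin r => ¬ g k i = i, A i (g k i)

lemma rowprod {n r : ℕ} (A : Matrix (Fin n) (Fin n) ℂ) (g : Fin r → Equiv.Perm (Fin n))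
    (i : Fin n) :
    ∏ k, (ZaddA A) i (g k i) = CM (cI A g i) * (XM i + CM (A i i)) ^ (fI g i) := by
  have hentry : ∀ k, (ZaddA A) i (g k i)
      = if g k i = i then XM i + CM (A i i) else CM (A i (g k i)) := fun k => by
    by_cases hk : g k i = i
    · simp [ZaddA, hk, if_pos]
    · simp only [ZaddA, Matrix.of_apply, if_neg hk, if_neg (fun hc : i = g k i => hk hc.symm),
        zero_add]
  calc ∏ k, (ZaddA A) i (g k i)
      = ∏ k, if g k i = i then XM i + CM (A i i) else CM (A i (g k i)) :=
        Finset.prod_congr rfl fun k _ => hentry k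
    _ = (∏ k ∈ Finset.univ.filter fun k => g k i = i, (XM i + CM (A i i)))
        * ∏ k ∈ Finset.univ.filter fun k : Fin r => ¬ g k i = i, CM (A i (g k i)) :=
        Finset.prod_ite _ _
    _ = CM (cI A g i) * (XM i + CM (A i i)) ^ (fI g i) := by
        rw [Finset.prod_const, mul_comm, cI, map_prod, fI]

lemma detpow {n r : ℕ} (A : Matrix (Fin n) (Fin n) ℂ) :
    (ZaddA A).det ^ r = ∑ g : Fin r → Equiv.Perm (Fin n),
      (((∏ k, Equiv.Perm.sign (g k) : ℤˣ) : ℤ) : MvPolynomial (Fin n) ℂ)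
        * ∏ i, (CM (cI A g i) * (XM i + CM (A i i)) ^ (fI g i)) := by
  have hdet : (ZaddA A).det = ∑ σ : Equiv.Perm (Fin n),
      ((Equiv.Perm.sign σ : ℤ) : MvPolynomial (Fin n) ℂ) * ∏ i, (ZaddA A) i (σ i) := by
    rw [← Matrix.det_transpose, Matrix.det_apply']
    exact Finset.sum_congr rfl fun σ _ => by simp [Matrix.transpose_apply]
  have hpow : (ZaddA A).det ^ r = ∏ _k : Fin r, (ZaddA A).det := by
    rw [Finset.prod_const, Finset.card_univ, Fintype.card_fin]
  rw [hpow, show (∏ _k : Fin r, (ZaddA A).det) = ∏ _k : Fin r, ∑ σ : Equiv.Perm (Fin n),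
      ((Equiv.Perm.sign σ : ℤ) : MvPolynomial (Fin n) ℂ) * ∏ i, (ZaddA A) i (σ i) from
      Finset.prod_congr rfl fun _ _ => hdet, Finset.prod_univ_sum]
  refine Finset.sum_congr rfl fun g _ => ?_
  rw [Finset.prod_mul_distrib]
  congr 1
  · push_cast
    rfl
  · rw [Finset.prod_comm]
    exact Finset.prod_congr rfl fun i _ => rowprod A g i

lemma D_detpow {n r : ℕ} (A : Matrix (Fin n) (Fin n) ℂ) :
    (List.ofFn (fun i : Fin n => (pd i) ^ (r-1))).prod ((ZaddA A).det ^ r)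
      = ∑ g : Fin r → Equiv.Perm (Fin n),
        (((∏ k, Equiv.Perm.sign (g k) : ℤˣ) : ℤ) : MvPolynomial (Fin n) ℂ)
          * ∏ i, (CM (cI A g i * ((fI g i).descFactorial (r-1) : ℂ))
              * (XM i + CM (A i i)) ^ (fI g i - (r-1))) := by
  rw [detpow, map_sum]
  refine Finset.sum_congr rfl fun g _ => ?_
  rw [show ((((∏ k, Equiv.Perm.sign (g k) : ℤˣ) : ℤ) : MvPolynomial (Fin n) ℂ)
        * ∏ i, (CM (cI A g i) * (XM i + CM (A i i)) ^ (fI g i)))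
      = (((∏ k, Equiv.Perm.sign (g k) : ℤˣ) : ℤ)
        • ∏ i, (CM (cI A g i) * (XM i + CM (A i i)) ^ (fI g i))) from (zsmul_eq_mul _ _).symm,
    map_zsmul, zsmul_eq_mul]
  congr 1
  rw [List.ofFn_eq_map,
    lemL (r-1) (fun i => CM (cI A g i) * (XM i + CM (A i i)) ^ (fI g i))
      (fun i => ⟨_, _, _, rfl⟩) (List.finRange n) (List.nodup_finRange n)]
  exact Finset.prod_congr rfl fun i _ => by
    rw [if_pos (List.mem_finRange i), pdA]

lemma eP_good {n r : ℕ} {σ : Equiv.Perm (Fin n)} {h : Fin n → Fin r}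
    (hinv : h ∘ ⇑σ = h) : Good (eP (σ, h)) := by
  intro i k l hk hl
  rw [eP_apply hinv] at hk hl
  by_cases h1 : h i = k
  · by_cases h2 : h i = l
    · rw [← h1, h2]
    · exact absurd rfl (by rwa [if_neg h2] at hl)
  · exact absurd rfl (by rwa [if_neg h1] at hk)

noncomputable def h0 {n r : ℕ} (hr : 1 ≤ r) (g : Fin r → Equiv.Perm (Fin n)) :
    Fin n → Fin r := fun i =>
  if hx : ∃ k, g k i ≠ i then hx.choose else ⟨0, hr⟩

lemma h0_eq {n r : ℕ} (hr : 1 ≤ r) {g : Fin r → Equiv.Perm (Fin n)} (hg : Good g)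
    {i : Fin n} {k : Fin r} (hk : g k i ≠ i) : h0 hr g i = k := by
  have hx : ∃ k, g k i ≠ i := ⟨k, hk⟩
  rw [h0, dif_pos hx]
  exact hg i hx.choose k hx.choose_spec hk

lemma sigma_move_iff {n r : ℕ} {g : Fin r → Equiv.Perm (Fin n)} (hg : Good g) (i : Fin n) :
    sigmaOf g i ≠ i ↔ ∃ k, g k i ≠ i := by
  constructor
  · intro hi
    by_contra hc
    push_neg at hc
    exact hi (sigmaOf_fix g i hc)
  · rintro ⟨k, hk⟩
    rw [sigmaOf_move hg i k hk]
    exact hk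

lemma h0_inv {n r : ℕ} (hr : 1 ≤ r) {g : Fin r → Equiv.Perm (Fin n)} (hg : Good g) :
    h0 hr g ∘ ⇑(sigmaOf g) = h0 hr g := by
  funext i
  by_cases hx : ∃ k, g k i ≠ i
  · obtain ⟨k, hk⟩ := hx
    have h1 : sigmaOf g i = g k i := sigmaOf_move hg i k hk
    have h2 : g k (sigmaOf g i) ≠ sigmaOf g i := by rw [h1]; exact move_move (g k) hk
    simp only [Function.comp_apply]
    rw [h0_eq hr hg h2, h0_eq hr hg hk]
  · push_neg at hx
    simp only [Function.comp_apply, sigmaOf_fix g i hx]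

lemma eP_h0 {n r : ℕ} (hr : 1 ≤ r) {g : Fin r → Equiv.Perm (Fin n)} (hg : Good g) :
    eP (sigmaOf g, h0 hr g) = g := by
  funext k
  apply Equiv.ext; intro i
  rw [eP_apply (h0_inv hr hg)]
  by_cases hx : ∃ k, g k i ≠ i
  · obtain ⟨k₀, hk₀⟩ := hx
    rw [h0_eq hr hg hk₀]
    by_cases hkk : k₀ = k
    · rw [if_pos hkk, ← hkk, sigmaOf_move hg i k₀ hk₀]
    · rw [if_neg hkk]
      by_contra hc
      exact hkk (hg i k₀ k hk₀ fun hgi => hc hgi.symm)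
  · push_neg at hx
    rw [sigmaOf_fix g i hx, hx k, ite_self]

lemma fiber_fst {n r : ℕ} {p : Equiv.Perm (Fin n) × (Fin n → Fin r)}
    (hinv : p.2 ∘ ⇑p.1 = p.2) {g : Fin r → Equiv.Perm (Fin n)} (hep : eP p = g) :
    p.1 = sigmaOf g := by
  obtain ⟨σ, h⟩ := p
  simp only at hinv hep ⊢
  have hg : Good g := hep ▸ eP_good hinv
  apply Equiv.ext; intro i
  by_cases hx : ∃ k, g k i ≠ i
  · obtain ⟨k, hk⟩ := hx
    have hik : eP (σ, h) k i = g k i := by rw [hep]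
    rw [eP_apply hinv] at hik
    rw [sigmaOf_move hg i k hk, ← hik]
    by_cases hh : h i = k
    · rw [if_pos hh]
    · rw [if_neg hh] at hik
      exact absurd hik.symm hk
  · push_neg at hx
    rw [sigmaOf_fix g i hx]
    by_contra hσ
    have : eP (σ, h) (h i) i = g (h i) i := by rw [hep]
    rw [eP_apply hinv, if_pos rfl, hx (h i)] at this
    exact hσ this

lemma fiber_snd {n r : ℕ} (hr : 1 ≤ r) {p : Equiv.Perm (Fin n) × (Fin n → Fin r)}
    (hinv : p.2 ∘ ⇑p.1 = p.2) {g : Fin r → Equiv.Perm (Fin n)} (hep : eP p = g)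
    {i : Fin n} (hi : sigmaOf g i ≠ i) : p.2 i = h0 hr g i := by
  obtain ⟨σ, h⟩ := p
  simp only at hinv hep ⊢
  have hg : Good g := hep ▸ eP_good hinv
  obtain ⟨k, hk⟩ := (sigma_move_iff hg i).mp hi
  have hik : eP (σ, h) k i = g k i := by rw [hep]
  rw [eP_apply hinv] at hik
  by_cases hh : h i = k
  · rw [hh, h0_eq hr hg hk]
  · rw [if_neg hh] at hik
    exact absurd hik.symm hk

lemma fiber_mem {n r : ℕ} (hr : 1 ≤ r) {g : Fin r → Equiv.Perm (Fin n)} (hg : Good g)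
    {h : Fin n → Fin r} (hagree : ∀ i, sigmaOf g i ≠ i → h i = h0 hr g i) :
    h ∘ ⇑(sigmaOf g) = h ∧ eP (sigmaOf g, h) = g := by
  have hinv : h ∘ ⇑(sigmaOf g) = h := by
    funext i
    simp only [Function.comp_apply]
    by_cases hi : sigmaOf g i ≠ i
    · have hσσ : sigmaOf g (sigmaOf g i) ≠ sigmaOf g i := move_move _ hi
      rw [hagree _ hσσ, hagree _ hi]
      exact congrFun (h0_inv hr hg) i
    · push_neg at hi
      rw [hi]
  refine ⟨hinv, ?_⟩
  funext k
  apply Equiv.ext; intro i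
  rw [eP_apply hinv]
  by_cases hi : sigmaOf g i ≠ i
  · rw [hagree _ hi]
    have := eP_h0 hr hg
    have h2 : eP (sigmaOf g, h0 hr g) k i = g k i := by rw [this]
    rw [eP_apply (h0_inv hr hg)] at h2
    exact h2
  · push_neg at hi
    obtain hx : ∀ k, g k i = i := by
      by_contra hc
      push_neg at hc
      exact ((sigma_move_iff hg i).mpr hc) hi
    rw [hi, hx k, ite_self]

lemma movers_singleton {n r : ℕ} (hr : 1 ≤ r) {g : Fin r → Equiv.Perm (Fin n)}
    (hg : Good g) {i : Fin n} (hi : sigmaOf g i ≠ i) :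
    (Finset.univ.filter fun k : Fin r => ¬ g k i = i) = {h0 hr g i} := by
  obtain ⟨k₀, hk₀⟩ := (sigma_move_iff hg i).mp hi
  ext k
  simp only [Finset.mem_filter, Finset.mem_univ, true_and, Finset.mem_singleton]
  constructor
  · intro hk; exact (h0_eq hr hg hk).symm
  · intro hk; rw [hk, h0_eq hr hg hk₀]; exact hk₀

lemma fI_supp {n r : ℕ} (hr : 1 ≤ r) {g : Fin r → Equiv.Perm (Fin n)}
    (hg : Good g) {i : Fin n} (hi : sigmaOf g i ≠ i) : fI g i = r - 1 := by
  have hsum := Finset.card_filter_add_card_filter_not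
    (s := (Finset.univ : Finset (Fin r))) (p := fun k => g k i = i)
  rw [show (Finset.filter (fun a => ¬(fun k => (g k) i = i) a) Finset.univ)
      = {h0 hr g i} from movers_singleton hr hg hi] at hsum
  simp only [Finset.card_singleton, Finset.card_univ, Fintype.card_fin] at hsum
  rw [fI]
  omega

lemma cI_supp {n r : ℕ} (hr : 1 ≤ r) (A : Matrix (Fin n) (Fin n) ℂ)
    {g : Fin r → Equiv.Perm (Fin n)} (hg : Good g) {i : Fin n}
    (hi : sigmaOf g i ≠ i) : cI A g i = A i (sigmaOf g i) := by
  obtain ⟨k₀, hk₀⟩ := (sigma_move_iff hg i).mp hi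
  rw [cI, movers_singleton hr hg hi, Finset.prod_singleton, h0_eq hr hg hk₀,
    sigmaOf_move hg i k₀ hk₀]

lemma fI_nonsupp {n r : ℕ} {g : Fin r → Equiv.Perm (Fin n)} {i : Fin n}
    (hi : ∀ k, g k i = i) : fI g i = r := by
  rw [fI, Finset.filter_true_of_mem fun k _ => hi k, Finset.card_univ, Fintype.card_fin]

lemma cI_nonsupp {n r : ℕ} (A : Matrix (Fin n) (Fin n) ℂ) {g : Fin r → Equiv.Perm (Fin n)}
    {i : Fin n} (hi : ∀ k, g k i = i) : cI A g i = 1 := by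
  rw [cI, Finset.filter_false_of_mem fun k _ => by simp [hi k], Finset.prod_empty]

lemma descFactorial_pred {r : ℕ} (hr : 1 ≤ r) : r.descFactorial (r - 1) = r.factorial := by
  have h1 : r.descFactorial ((r-1)+1) = (r - (r-1)) * r.descFactorial (r-1) :=
    Nat.descFactorial_succ r (r-1)
  have h2 : (r-1)+1 = r := by omega
  have h3 : r - (r-1) = 1 := by omega
  rw [h2, h3, one_mul] at h1
  rw [← h1, Nat.descFactorial_self]

noncomputable def FF {n : ℕ} (r : ℕ) (A : Matrix (Fin n) (Fin n) ℂ)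
    (g : Fin r → Equiv.Perm (Fin n)) : MvPolynomial (Fin n) ℂ :=
  (((∏ k, Equiv.Perm.sign (g k) : ℤˣ) : ℤ) : MvPolynomial (Fin n) ℂ)
    * ∏ i, (CM (cI A g i * ((fI g i).descFactorial (r-1) : ℂ))
        * (XM i + CM (A i i)) ^ (fI g i - (r-1)))

noncomputable def GG {n : ℕ} (r : ℕ) (A : Matrix (Fin n) (Fin n) ℂ)
    (p : Equiv.Perm (Fin n) × (Fin n → Fin r)) : MvPolynomial (Fin n) ℂ :=
  ((Equiv.Perm.sign p.1 : ℤ) : MvPolynomial (Fin n) ℂ)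
    * (CM ((((r-1).factorial : ℂ)) ^ n) * ∏ i, (ZaddA A) i (p.1 i))

lemma FF_bad {n r : ℕ} (A : Matrix (Fin n) (Fin n) ℂ) {g : Fin r → Equiv.Perm (Fin n)}
    (hg : ¬ Good g) : FF r A g = 0 := by
  rw [Good] at hg
  push_neg at hg
  obtain ⟨i, k, l, hk, hl, hkl⟩ := hg
  have hsub : {k, l} ⊆ Finset.univ.filter fun k : Fin r => ¬ g k i = i := by
    intro x hx
    rcases Finset.mem_insert.mp hx with rfl | hx
    · simp [hk]
    · rw [Finset.mem_singleton.mp hx]; simp [hl]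
  have hcard2 : 2 ≤ (Finset.univ.filter fun k : Fin r => ¬ g k i = i).card := by
    calc 2 = ({k, l} : Finset (Fin r)).card := by rw [Finset.card_insert_of_notMem (by simp [hkl]), Finset.card_singleton]
    _ ≤ _ := Finset.card_le_card hsub
  have hsum := Finset.card_filter_add_card_filter_not
    (s := (Finset.univ : Finset (Fin r))) (p := fun k => g k i = i)
  have hlt : fI g i < r - 1 := by
    rw [fI]
    simp only [Finset.card_univ, Fintype.card_fin] at hsum
    omega
  rw [FF]
  have : ((fI g i).descFactorial (r-1) : ℂ) = 0 := by
    rw [Nat.descFactorial_eq_zero_iff_lt.mpr hlt]; simp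
  rw [Finset.prod_eq_zero (Finset.mem_univ i) (by rw [this, mul_zero, map_zero, zero_mul]),
    mul_zero]

lemma FF_good {n r : ℕ} (hr : 1 ≤ r) (A : Matrix (Fin n) (Fin n) ℂ)
    {g : Fin r → Equiv.Perm (Fin n)} (hg : Good g) :
    FF r A g = ((Equiv.Perm.sign (sigmaOf g) : ℤ) : MvPolynomial (Fin n) ℂ)
      * (CM (((((r-1).factorial : ℂ)) ^ n * (r : ℂ) ^ (n - (sigmaOf g).support.card)))
        * ∏ i, (ZaddA A) i (sigmaOf g i)) := by
  rw [FF, sign_sigmaOf]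
  congr 1
  have hfac : r.factorial = (r-1).factorial * r := by
    rw [mul_comm]
    exact (Nat.mul_factorial_pred (by omega)).symm
  have hper : ∀ i, CM (cI A g i * ((fI g i).descFactorial (r-1) : ℂ))
      * (XM i + CM (A i i)) ^ (fI g i - (r-1))
      = CM (((r-1).factorial : ℂ) * (if sigmaOf g i ≠ i then 1 else (r:ℂ)))
        * (ZaddA A) i (sigmaOf g i) := fun i => by
    by_cases hi : sigmaOf g i ≠ i
    · rw [fI_supp hr hg hi, cI_supp hr A hg hi, Nat.sub_self, pow_zero, mul_one,
        Nat.descFactorial_self, if_pos hi]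
      have hM : (ZaddA A) i (sigmaOf g i) = CM (A i (sigmaOf g i)) := by
        simp only [ZaddA, Matrix.of_apply, if_neg (fun hc : i = sigmaOf g i => hi hc.symm),
          zero_add]
      rw [hM, ← _root_.map_mul]
      congr 1
      ring
    · push_neg at hi
      have hfix : ∀ k, g k i = i := by
        by_contra hc
        push_neg at hc
        exact ((sigma_move_iff hg i).mpr hc) hi
      have hM : (ZaddA A) i (sigmaOf g i) = XM i + CM (A i i) := by
        simp [ZaddA, hi]
      rw [fI_nonsupp hfix, cI_nonsupp A hfix, descFactorial_pred hr,
        show r - (r-1) = 1 by omega, pow_one, if_neg (by simp [hi]), hM, one_mul]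
      congr 1
      rw [hfac]
      push_cast
      ring
  rw [Finset.prod_congr rfl fun i _ => hper i, Finset.prod_mul_distrib, ← map_prod]
  congr 2
  rw [Finset.prod_mul_distrib, Finset.prod_const, Finset.card_univ, Fintype.card_fin]
  congr 1
  rw [Finset.prod_ite (fun _ : Fin n => (1:ℂ)) (fun _ : Fin n => (r:ℂ)), Finset.prod_const,
    Finset.prod_const, one_pow, one_mul]
  congr 1
  have hsum := Finset.card_filter_add_card_filter_not
    (s := (Finset.univ : Finset (Fin n))) (p := fun x => sigmaOf g x ≠ x)
  have hsupp : (Finset.filter (fun x => sigmaOf g x ≠ x) Finset.univ) = (sigmaOf g).support := rfl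
  rw [hsupp] at hsum
  simp only [Finset.card_univ, Fintype.card_fin] at hsum
  omega

lemma fiber_sum {n r : ℕ} (hr : 1 ≤ r) (A : Matrix (Fin n) (Fin n) ℂ)
    (g : Fin r → Equiv.Perm (Fin n)) :
    ∑ p ∈ (Finset.univ.filter
        fun p : Equiv.Perm (Fin n) × (Fin n → Fin r) => p.2 ∘ ⇑p.1 = p.2).filter
        (fun p => eP p = g), GG r A p = FF r A g := by
  by_cases hg : Good g
  · have hfib : (Finset.univ.filter
        fun p : Equiv.Perm (Fin n) × (Fin n → Fin r) => p.2 ∘ ⇑p.1 = p.2).filter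
        (fun p => eP p = g)
        = (Finset.univ.filter fun h : Fin n → Fin r =>
            ∀ i ∈ (sigmaOf g).support, h i = h0 hr g i).image fun h => (sigmaOf g, h) := by
      ext p
      simp only [Finset.mem_filter, Finset.mem_univ, true_and, Finset.mem_image]
      constructor
      · rintro ⟨hinv, hep⟩
        refine ⟨p.2, fun i hi => fiber_snd hr hinv hep (Equiv.Perm.mem_support.mp hi), ?_⟩
        rw [← fiber_fst hinv hep]
      · rintro ⟨h, hagree, rfl⟩
        exact fiber_mem hr hg fun i hi =>
          hagree i (Equiv.Perm.mem_support.mpr hi)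
    rw [hfib, Finset.sum_image (fun x _ y _ hxy => (Prod.mk.injEq _ _ _ _ ▸ hxy).2 ▸ rfl)]
    have hconst : ∀ h : Fin n → Fin r, GG r A (sigmaOf g, h)
        = ((Equiv.Perm.sign (sigmaOf g) : ℤ) : MvPolynomial (Fin n) ℂ)
          * (CM ((((r-1).factorial : ℂ)) ^ n) * ∏ i, (ZaddA A) i (sigmaOf g i)) :=
      fun h => rfl
    rw [Finset.sum_congr rfl fun h _ => hconst h, Finset.sum_const,
      card_prescribed ((sigmaOf g).support) (h0 hr g), FF_good hr A hg, nsmul_eq_mul,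
      _root_.map_mul CM]
    have hcast : ((r ^ (n - (sigmaOf g).support.card) : ℕ) : MvPolynomial (Fin n) ℂ)
        = CM ((r : ℂ) ^ (n - (sigmaOf g).support.card)) := by
      push_cast
      simp
    rw [hcast]
    ring
  · have hfib : (Finset.univ.filter
        fun p : Equiv.Perm (Fin n) × (Fin n → Fin r) => p.2 ∘ ⇑p.1 = p.2).filter
        (fun p => eP p = g) = ∅ := by
      rw [Finset.filter_eq_empty_iff]
      rintro p hp hep
      exact hg (hep ▸ eP_good (Finset.mem_filter.mp hp).2)
    rw [hfib, Finset.sum_empty, FF_bad A hg]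


/-- Multilinearization: `((r-1)!)^n det_r(Z+A) = ∂^{r-1}_{z₁} ⋯ ∂^{r-1}_{z_n} (det(Z+A))^r`
as an identity in `ℂ[z₁,…,z_n]`. -/
theorem detr_multilinearization {n : ℕ} (r : ℕ) (hr : 1 ≤ r)
    (A : Matrix (Fin n) (Fin n) ℂ) :
    (((r-1).factorial : ℂ) ^ n) • detr r (ZaddA A)
      = ((List.ofFn (fun i : Fin n => (pd i) ^ (r-1))).prod) ((ZaddA A).det ^ r) := by
  rw [D_detpow A]
  have hFF : ∀ g : Fin r → Equiv.Perm (Fin n),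
      (((∏ k, Equiv.Perm.sign (g k) : ℤˣ) : ℤ) : MvPolynomial (Fin n) ℂ)
          * ∏ i, (CM (cI A g i * ((fI g i).descFactorial (r-1) : ℂ))
              * (XM i + CM (A i i)) ^ (fI g i - (r-1))) = FF r A g := fun g => rfl
  rw [Finset.sum_congr rfl fun g _ => hFF g]
  rw [Finset.sum_congr rfl fun g (_ : g ∈ Finset.univ) => (fiber_sum hr A g).symm]
  rw [Finset.sum_fiberwise_of_maps_to (fun p _ => Finset.mem_univ (eP p)) (GG r A)]
  rw [Finset.sum_filter, Fintype.sum_prod_type]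
  have hinner : ∀ σ : Equiv.Perm (Fin n),
      (∑ h : Fin n → Fin r, if h ∘ ⇑σ = h then GG r A (σ, h) else 0)
        = (r : MvPolynomial (Fin n) ℂ) ^ cycleCount σ
          * (((Equiv.Perm.sign σ : ℤ) : MvPolynomial (Fin n) ℂ)
            * (CM ((((r-1).factorial : ℂ)) ^ n) * ∏ i, (ZaddA A) i (σ i))) := fun σ => by
    have hc : ∀ h : Fin n → Fin r, GG r A (σ, h)
        = ((Equiv.Perm.sign σ : ℤ) : MvPolynomial (Fin n) ℂ)
          * (CM ((((r-1).factorial : ℂ)) ^ n) * ∏ i, (ZaddA A) i (σ i)) := fun h => rfl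
    rw [← Finset.sum_filter, Finset.sum_congr rfl fun h _ => hc h,
      Finset.sum_const, card_invariant σ, nsmul_eq_mul]
    push_cast
    ring
  rw [Finset.sum_congr rfl fun σ _ => hinner σ, detr, Finset.smul_sum]
  refine Finset.sum_congr rfl fun σ _ => ?_
  rw [MvPolynomial.smul_eq_C_mul]
  push_cast
  ring
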